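/- Let (Ω, F, P) be a probability space, let X : Ω → ℝ be an integrable random variable, and let α ∈ (0,1). If there exists z ∈ ℝ such that z + (1/(1−α))·E[max(X − z, 0)] ≤ 0, then P(X ≤ 0) ≥ α. -/
import Mathlib


open MeasureTheory

/-- if the Rockafellar–Uryasev CVaR objective of an integrable random
variable `X` at level `α` is nonpositive at some `z`, then `P(X ≤ 0) ≥ α`. -/
theorem prob_le_of_cvar_nonpos
    {Ω : Type*} [MeasurableSpace Ω] (P : Measure Ω) [IsProbabilityMeasure P]
    (X : Ω → ℝ) (hX : Integrable X P) (α : ℝ) (hα : α ∈ Set.Ioo (0 : ℝ) 1)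
    (h : ∃ z : ℝ, z + (1 / (1 - α)) * ∫ ω, max (X ω - z) 0 ∂P ≤ 0) :
    ENNReal.ofReal α ≤ P {ω | X ω ≤ 0} := by
  obtain ⟨hα0, hα1⟩ := hα
  have h1α : (0:ℝ) < 1 - α := by linarith
  obtain ⟨z, hz⟩ := h
  have hint : Integrable (fun ω => max (X ω - z) 0) P :=
    (hX.sub (integrable_const z)).pos_part
  have hnn : 0 ≤ ∫ ω, max (X ω - z) 0 ∂P :=
    integral_nonneg fun ω => le_max_right _ _
  have hz0 : z ≤ 0 := by nlinarith [mul_nonneg (le_of_lt (by positivity : (0:ℝ) < 1/(1-α))) hnn]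
  rcases eq_or_lt_of_le hz0 with hz0 | hz0
  · -- z = 0 : integral of max(X,0) ≤ 0, so X ≤ 0 a.e.
    subst hz0
    have hI : ∫ ω, max (X ω - 0) 0 ∂P ≤ 0 := by nlinarith [one_div_pos.2 h1α]
    have hI0 : ∫ ω, max (X ω - 0) 0 ∂P = 0 := le_antisymm hI hnn
    have hae : (fun ω => max (X ω - 0) 0) =ᵐ[P] 0 :=
      (integral_eq_zero_iff_of_nonneg (fun ω => le_max_right _ _) hint).1 hI0
    have hae' : ∀ᵐ ω ∂P, X ω ≤ 0 := hae.mono fun ω hw => by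
      simpa [sub_zero, max_eq_right_iff] using hw
    have hnull : P {ω | ¬ (X ω ≤ 0)} = 0 := ae_iff.1 hae'
    have h1 : (1:ENNReal) ≤ P {ω | X ω ≤ 0} := by
      have hsub : (Set.univ : Set Ω) ⊆ {ω | X ω ≤ 0} ∪ {ω | ¬ (X ω ≤ 0)} := fun ω _ => by
        rcases le_or_gt (X ω) 0 with hc | hc
        · exact Or.inl hc
        · exact Or.inr (not_le.2 hc)
      calc (1:ENNReal) = P Set.univ := measure_univ.symm
        _ ≤ P ({ω | X ω ≤ 0} ∪ {ω | ¬ (X ω ≤ 0)}) := measure_mono hsub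
        _ ≤ P {ω | X ω ≤ 0} + P {ω | ¬ (X ω ≤ 0)} := measure_union_le _ _
        _ = P {ω | X ω ≤ 0} := by rw [hnull, add_zero]
    exact le_trans (ENNReal.ofReal_le_one.2 hα1.le) h1
  · -- z < 0 : Markov
    have hmarkov := mul_meas_ge_le_integral_of_nonneg
      (Filter.Eventually.of_forall fun ω => le_max_right (X ω - z) 0) hint (-z)
    have hsub : {ω | 0 < X ω} ⊆ {ω | -z ≤ max (X ω - z) 0} := by
      intro ω hω
      simp only [Set.mem_setOf_eq] at hω ⊢
      exact le_max_of_le_left (by linarith)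
    have hle : (P {ω | 0 < X ω}).toReal ≤ (P {ω | -z ≤ max (X ω - z) 0}).toReal :=
      ENNReal.toReal_mono (measure_ne_top _ _) (measure_mono hsub)
    have hIle : ∫ ω, max (X ω - z) 0 ∂P ≤ (-z) * (1 - α) := by
      have hd : (∫ ω, max (X ω - z) 0 ∂P) / (1 - α) ≤ -z := by
        rw [div_mul_eq_mul_div, one_mul] at hz; linarith
      have := (div_le_iff₀ h1α).1 hd
      linarith
    have hPz : (P {ω | 0 < X ω}).toReal ≤ 1 - α := by
      have h2 : (-z) * (P {ω | 0 < X ω}).toReal ≤ (-z) * (1 - α) := by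
        calc (-z) * (P {ω | 0 < X ω}).toReal
            ≤ (-z) * (P {ω | -z ≤ max (X ω - z) 0}).toReal :=
              mul_le_mul_of_nonneg_left hle (by linarith)
          _ ≤ (∫ ω, max (X ω - z) 0 ∂P) := hmarkov
          _ ≤ (-z) * (1 - α) := hIle
      exact le_of_mul_le_mul_left h2 (by linarith)
    have hcover : (1:ENNReal) ≤ P {ω | X ω ≤ 0} + P {ω | 0 < X ω} := by
      have : (Set.univ : Set Ω) ⊆ {ω | X ω ≤ 0} ∪ {ω | 0 < X ω} := by
        intro ω _
        rcases le_or_gt (X ω) 0 with hc | hc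
        · exact Or.inl hc
        · exact Or.inr hc
      calc (1:ENNReal) = P Set.univ := (measure_univ).symm
        _ ≤ P ({ω | X ω ≤ 0} ∪ {ω | 0 < X ω}) := measure_mono this
        _ ≤ _ := measure_union_le _ _
    have hfin1 : P {ω | X ω ≤ 0} ≠ ⊤ := measure_ne_top _ _
    have hfin2 : P {ω | 0 < X ω} ≠ ⊤ := measure_ne_top _ _
    have htr : (1:ℝ) ≤ (P {ω | X ω ≤ 0}).toReal + (P {ω | 0 < X ω}).toReal := by
      have := ENNReal.toReal_mono (by finiteness) hcover
      rwa [ENNReal.toReal_one, ENNReal.toReal_add hfin1 hfin2] at this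
    have : α ≤ (P {ω | X ω ≤ 0}).toReal := by linarith
    exact ENNReal.ofReal_le_of_le_toReal this
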